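/- Let (X_n)_{n≥1} be a sequence of non-negative random variables and (b_n)_{n≥1} a sequence of positive real numbers; set S_n = Σ_{k=1}^n b_k X_k and A_n = Σ_{k=1}^n b_k. Suppose that: (i) A_n → ∞ as n → ∞; (ii) there exist a constant C > 0 and N ∈ ℕ such that Σ_{k=m}^n b_k E[X_k] ≤ C Σ_{k=m}^n b_k for all m ≤ n with n − m ≥ N; (iii) there exists ψ ∈ Ψ_c and a constant K such that E[|S_n − E[S_n]|²] ≤ K A_n² / ψ(A_n) for all n. Then (S_n − E[S_n])/A_n → 0 almost surely. -/

import Mathlib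

open Filter MeasureTheory Topology

/-- `Ψ_c`: the set of monotonically increasing functions `ψ : (0,∞) → (0,∞)` with
`∑_{n=1}^∞ 1/(n ψ(n)) < ∞`. -/
def PsiC (ψ : ℝ → ℝ) : Prop :=
  (∀ x : ℝ, 0 < x → 0 < ψ x) ∧ MonotoneOn ψ (Set.Ioi (0 : ℝ)) ∧
    Summable fun n : ℕ => 1 / ((n + 1 : ℝ) * ψ (n + 1))

private lemma aux_div_summable {s : ℕ → ℝ} (hs : ∀ n, 0 ≤ s n) (h : Summable s)
    {M : ℕ} (hM : 0 < M) : Summable fun j => s (j / M) := by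
  classical
  apply summable_of_sum_range_le (c := M * ∑' n, s n) (fun j => hs _)
  intro J
  calc ∑ j ∈ Finset.range J, s (j / M)
      = ∑ q ∈ (Finset.range J).image (· / M),
          ((Finset.range J).filter (fun j => j / M = q)).card • s q := Finset.sum_comp s (· / M)
    _ ≤ ∑ q ∈ (Finset.range J).image (· / M), M * s q := by
        apply Finset.sum_le_sum; intro q hq
        rw [nsmul_eq_mul]
        apply mul_le_mul_of_nonneg_right _ (hs q)
        have hsub : (Finset.range J).filter (fun j => j / M = q) ⊆ Finset.Ico (q * M) (q * M + M) := by
          intro j hj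
          simp only [Finset.mem_filter, Finset.mem_range] at hj
          rw [Finset.mem_Ico]
          constructor
          · rw [← hj.2]; exact Nat.div_mul_le_self j M
          · rw [← hj.2]
            calc j = M * (j / M) + j % M := (Nat.div_add_mod j M).symm
              _ < M * (j / M) + M := Nat.add_lt_add_left (Nat.mod_lt j hM) _
              _ = j / M * M + M := by ring
        calc ((((Finset.range J).filter (fun j => j / M = q)).card : ℝ))
            ≤ ((Finset.Ico (q * M) (q * M + M)).card : ℝ) := by
              exact_mod_cast Finset.card_le_card hsub
          _ = M := by rw [Nat.card_Ico]; simp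
    _ = M * ∑ q ∈ (Finset.range J).image (· / M), s q := by rw [Finset.mul_sum]
    _ ≤ M * ∑' n, s n := by
        apply mul_le_mul_of_nonneg_left _ (by positivity)
        exact Summable.sum_le_tsum _ (fun i _ => hs i) h

private lemma aux_condensed {ψ : ℝ → ℝ} (hψ : PsiC ψ) :
    Summable fun n : ℕ => 1 / ψ (2 ^ n) := by
  obtain ⟨hpos, hmono, hsum⟩ := hψ
  set f : ℕ → ℝ := fun n => if n = 0 then 1 else 1 / (n * ψ n) with hf_def
  have hcast : ∀ n : ℕ, n ≠ 0 → f n = 1 / (n * ψ n) := fun n hn => if_neg hn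
  have hfpos : ∀ n, 0 ≤ f n := by
    intro n
    by_cases hn : n = 0
    · simp [hf_def, hn]
    · rw [hcast n hn]
      have hn' : 0 < (n : ℝ) := by exact_mod_cast Nat.pos_of_ne_zero hn
      have := hpos _ hn'
      positivity
  have hfmono : ∀ ⦃m n : ℕ⦄, 0 < m → m ≤ n → f n ≤ f m := by
    intro m n hm hmn
    have hm' : 0 < (m : ℝ) := by exact_mod_cast hm
    have hn' : 0 < (n : ℝ) := lt_of_lt_of_le hm' (by exact_mod_cast hmn)
    rw [hcast m (Nat.pos_iff_ne_zero.1 hm), hcast n (Nat.pos_iff_ne_zero.1 (lt_of_lt_of_le hm hmn))]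
    apply one_div_le_one_div_of_le (by have := hpos _ hm'; positivity)
    have hψle : ψ m ≤ ψ n := hmono hm' hn' (by exact_mod_cast hmn)
    have := hpos _ hm'
    apply mul_le_mul (by exact_mod_cast hmn) hψle this.le hn'.le
  have hf : Summable f := by
    rw [← summable_nat_add_iff 1]
    apply hsum.congr
    intro n
    rw [hcast (n + 1) (Nat.succ_ne_zero n)]
    push_cast
    ring_nf
  have h2 := (summable_condensed_iff_of_nonneg hfpos hfmono).2 hf
  apply h2.congr
  intro k
  rw [hcast (2 ^ k) (by positivity)]
  have h2k : (0:ℝ) < (2:ℝ) ^ k := by positivity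
  push_cast
  have hψk := hpos _ h2k
  field_simp

private lemma aux_geom {ψ : ℝ → ℝ} (hψ : PsiC ψ) {θ : ℝ} (hθ : 1 < θ) :
    Summable fun j : ℕ => 1 / ψ (θ ^ j) := by
  obtain ⟨M, hM2⟩ : ∃ M : ℕ, (2 : ℝ) < θ ^ M := pow_unbounded_of_one_lt 2 hθ
  have hM : 0 < M := by
    rcases Nat.eq_zero_or_pos M with rfl | h
    · exact absurd hM2 (by norm_num)
    · exact h
  have hθ0 : (0:ℝ) < θ := by linarith
  have hpos := hψ.1
  have hmono := hψ.2.1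
  have key : ∀ j : ℕ, 1 / ψ (θ ^ j) ≤ 1 / ψ (2 ^ (j / M)) := by
    intro j
    have h2pos : (0:ℝ) < 2 ^ (j / M) := by positivity
    have hle : (2:ℝ) ^ (j / M) ≤ θ ^ j := by
      calc (2:ℝ) ^ (j / M) ≤ (θ ^ M) ^ (j / M) := by
            apply pow_le_pow_left₀ (by norm_num) hM2.le
        _ = θ ^ (M * (j / M)) := by rw [← pow_mul]
        _ ≤ θ ^ j := pow_le_pow_right₀ hθ.le (Nat.mul_div_le j M)
    apply one_div_le_one_div_of_le (hpos _ h2pos)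
    exact hmono h2pos (lt_of_lt_of_le h2pos hle) hle
  apply Summable.of_nonneg_of_le (fun j => by have := hpos _ (pow_pos hθ0 j); positivity) key
  exact aux_div_summable (fun n => by have := hpos _ (pow_pos two_pos n); positivity)
    (aux_condensed hψ) hM

private lemma aux_cheb {Ω : Type*} [MeasurableSpace Ω] (P : Measure Ω) [IsProbabilityMeasure P]
    {f : Ω → ℝ} (hf : MemLp f 2 P) {a : ℝ} (ha : 0 < a) :
    P {ω | a < |f ω - ∫ x, f x ∂P|} ≤
      ENNReal.ofReal ((∫ ω, |f ω - ∫ x, f x ∂P| ^ 2 ∂P) / a ^ 2) := by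
  set c := ∫ x, f x ∂P with hc
  set g : Ω → ℝ := fun ω => |f ω - c| ^ 2 with hg
  have hgnn : ∀ ω, 0 ≤ g ω := fun ω => by positivity
  have hgint : Integrable g P := by
    have h1 : MemLp (fun ω => f ω - c) 2 P := hf.sub (memLp_const c)
    exact h1.integrable_sq.congr (ae_of_all _ fun ω => (sq_abs _).symm)
  have hsub : {ω | a < |f ω - c|} ⊆ {ω | a ^ 2 ≤ g ω} := by
    intro ω hω
    simp only [Set.mem_setOf_eq] at *
    have h0 : 0 ≤ |f ω - c| := abs_nonneg _
    have hgω : g ω = |f ω - c| ^ 2 := rfl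
    rw [hgω]
    nlinarith
  have hmark := mul_meas_ge_le_integral_of_nonneg (ae_of_all P hgnn) hgint (a ^ 2)
  have hintnn : 0 ≤ ∫ ω, g ω ∂P := integral_nonneg hgnn
  rw [ENNReal.le_ofReal_iff_toReal_le (measure_ne_top _ _) (by positivity)]
  calc (P {ω | a < |f ω - c|}).toReal ≤ (P {ω | a ^ 2 ≤ g ω}).toReal :=
        ENNReal.toReal_mono (measure_ne_top _ _) (measure_mono hsub)
    _ ≤ (∫ ω, g ω ∂P) / a ^ 2 := by
        rw [le_div_iff₀ (by positivity), mul_comm]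
        exact hmark

theorem stmt_0 {Ω : Type*} [MeasurableSpace Ω] (P : Measure Ω) [IsProbabilityMeasure P]
    (X : ℕ → Ω → ℝ) (hX : ∀ n, 1 ≤ n → MemLp (X n) 2 P)
    (hXnn : ∀ n, 1 ≤ n → ∀ ω, 0 ≤ X n ω)
    (b : ℕ → ℝ) (hb : ∀ n, 1 ≤ n → 0 < b n)
    (S : ℕ → Ω → ℝ) (hS : ∀ n ω, S n ω = ∑ k ∈ Finset.Icc 1 n, b k * X k ω)
    (A : ℕ → ℝ) (hA : ∀ n, A n = ∑ k ∈ Finset.Icc 1 n, b k)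
    (hAtop : Tendsto A atTop atTop)
    (hmean : ∃ C > (0 : ℝ), ∃ N : ℕ, ∀ m n : ℕ, 1 ≤ m → m ≤ n → N ≤ n - m →
      ∑ k ∈ Finset.Icc m n, b k * ∫ ω, X k ω ∂P ≤ C * ∑ k ∈ Finset.Icc m n, b k)
    (hvar : ∃ ψ : ℝ → ℝ, PsiC ψ ∧ ∃ K : ℝ, ∀ n, 1 ≤ n →
      ∫ ω, |S n ω - ∫ ω', S n ω' ∂P| ^ 2 ∂P ≤ K * (A n) ^ 2 / ψ (A n)) :
    ∀ᵐ ω ∂P, Tendsto (fun n => (S n ω - ∫ ω', S n ω' ∂P) / A n) atTop (𝓝 0) := by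
  classical
  obtain ⟨C, hC, N, hmean'⟩ := hmean
  obtain ⟨ψ, hψ, K, hvar'⟩ := hvar
  -- interval helpers
  have hIcc01 : ∀ q : ℕ, Finset.Icc 1 q = Finset.Ioc 0 q := by
    intro q; ext k; simp only [Finset.mem_Icc, Finset.mem_Ioc]; omega
  have hIoc : ∀ p q : ℕ, Finset.Icc (p+1) q = Finset.Ioc p q := by
    intro p q; ext k; simp only [Finset.mem_Icc, Finset.mem_Ioc]; omega
  -- basic facts about A
  have hAmono : Monotone A := by
    intro p q hpq
    rw [hA, hA]
    apply Finset.sum_le_sum_of_subset_of_nonneg (Finset.Icc_subset_Icc_right hpq)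
    intro k hk _
    exact (hb k (Finset.mem_Icc.1 hk).1).le
  have hApos : ∀ n, 1 ≤ n → 0 < A n := by
    intro n hn
    rw [hA]
    exact Finset.sum_pos (fun k hk => hb k (Finset.mem_Icc.1 hk).1)
      ⟨1, Finset.mem_Icc.2 ⟨le_refl 1, hn⟩⟩
  have hAdiff : ∀ p q : ℕ, p ≤ q → A q - A p = ∑ k ∈ Finset.Ioc p q, b k := by
    intro p q hpq
    rw [hA, hA, hIcc01, hIcc01, ← Finset.sum_Ioc_consecutive b (Nat.zero_le p) hpq]
    ring
  -- basic facts about S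
  have hSmem : ∀ n, MemLp (S n) 2 P := by
    intro n
    rw [show S n = fun ω => ∑ k ∈ Finset.Icc 1 n, b k * X k ω from funext (hS n)]
    exact memLp_finset_sum _ (fun k hk => (hX k (Finset.mem_Icc.1 hk).1).const_mul (b k))
  have hSle : ∀ ω, ∀ p q : ℕ, p ≤ q → S p ω ≤ S q ω := by
    intro ω p q hpq
    rw [hS, hS]
    apply Finset.sum_le_sum_of_subset_of_nonneg (Finset.Icc_subset_Icc_right hpq)
    intro k hk _
    have hk1 := (Finset.mem_Icc.1 hk).1
    exact mul_nonneg (hb k hk1).le (hXnn k hk1 ω)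
  have hES : ∀ n, ∫ ω', S n ω' ∂P = ∑ k ∈ Finset.Icc 1 n, b k * ∫ ω', X k ω' ∂P := by
    intro n
    rw [show S n = fun ω => ∑ k ∈ Finset.Icc 1 n, b k * X k ω from funext (hS n)]
    rw [integral_finset_sum _ (fun k hk =>
      ((hX k (Finset.mem_Icc.1 hk).1).integrable one_le_two).const_mul (b k))]
    exact Finset.sum_congr rfl (fun k _ => integral_const_mul (b k) (X k))
  have hEX : ∀ k, 1 ≤ k → 0 ≤ ∫ ω', X k ω' ∂P := fun k hk => integral_nonneg (hXnn k hk)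
  have hESdiff : ∀ p q : ℕ, p ≤ q → (∫ ω', S q ω' ∂P) - (∫ ω', S p ω' ∂P)
      = ∑ k ∈ Finset.Ioc p q, b k * ∫ ω', X k ω' ∂P := by
    intro p q hpq
    rw [hES, hES, hIcc01, hIcc01,
      ← Finset.sum_Ioc_consecutive (fun k => b k * ∫ ω', X k ω' ∂P) (Nat.zero_le p) hpq]
    ring
  have hmean2 : ∀ p q : ℕ, p + 1 ≤ q → N ≤ q - (p+1) →
      ∑ k ∈ Finset.Ioc p q, b k * ∫ ω', X k ω' ∂P ≤ C * (A q - A p) := by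
    intro p q h1 h2
    have h3 := hmean' (p+1) q (Nat.le_add_left 1 p) h1 h2
    rw [hIoc] at h3
    rw [hAdiff p q (le_trans (Nat.le_succ p) h1)]
    exact h3
  -- variance bound with nonnegative constant
  set K0 : ℝ := max K 0 with hK0def
  have hK0nn : 0 ≤ K0 := le_max_right _ _
  have hvar2 : ∀ n, 1 ≤ n →
      ∫ ω, |S n ω - ∫ ω', S n ω' ∂P| ^ 2 ∂P ≤ K0 * A n ^ 2 / ψ (A n) := by
    intro n hn
    refine le_trans (hvar' n hn) ?_
    have hψA := hψ.1 _ (hApos n hn)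
    exact (div_le_div_iff_of_pos_right hψA).2
      (mul_le_mul_of_nonneg_right (le_max_left _ _) (by positivity))
  -- reduction to eventual bounds
  suffices H : ∀ δ : ℝ, 0 < δ → ∀ᵐ ω ∂P, ∀ᶠ n in atTop,
      |S n ω - ∫ ω', S n ω' ∂P| ≤ δ * A n by
    have H2 : ∀ᵐ ω ∂P, ∀ m : ℕ, ∀ᶠ n in atTop,
        |S n ω - ∫ ω', S n ω' ∂P| ≤ (1/(m+1 : ℝ)) * A n :=
      ae_all_iff.2 fun m => H _ (by positivity)
    filter_upwards [H2] with ω hω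
    rw [NormedAddCommGroup.tendsto_nhds_zero]
    intro ε hε
    obtain ⟨m, hm⟩ := exists_nat_one_div_lt hε
    filter_upwards [hω m, eventually_ge_atTop 1] with n hn hn1
    have hAn := hApos n hn1
    rw [Real.norm_eq_abs, abs_div, abs_of_pos hAn, div_lt_iff₀ hAn]
    calc |S n ω - ∫ ω', S n ω' ∂P| ≤ (1/(m+1:ℝ)) * A n := hn
      _ < ε * A n := mul_lt_mul_of_pos_right hm hAn
  intro δ hδ
  have hε : 0 < δ / 2 := by positivity
  set θ : ℝ := 1 + δ / (2 * C) with hθ_def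
  have hθ : 1 < θ := by
    have h1 : 0 < δ / (2 * C) := by positivity
    rw [hθ_def]; linarith
  have hθ0 : (0:ℝ) < θ := by linarith
  have hCθ : C * (θ - 1) = δ / 2 := by rw [hθ_def]; field_simp; ring
  -- starting index
  obtain ⟨n₀, hn₀⟩ := eventually_atTop.1 (hAtop.eventually_ge_atTop 1)
  set n₁ := max 1 n₀ with hn₁def
  have hn₁1 : 1 ≤ n₁ := le_max_left _ _
  have hn₁A : 1 ≤ A n₁ := hn₀ _ (le_max_right _ _)
  -- the subsequence
  have hex : ∀ x : ℕ, ∃ n, x < n ∧ θ * A x ≤ A n := by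
    intro x
    obtain ⟨n, hn1, hn2⟩ :=
      ((eventually_gt_atTop x).and (hAtop.eventually_ge_atTop (θ * A x))).exists
    exact ⟨n, hn1, hn2⟩
  set step : ℕ → ℕ := fun x => Nat.find (hex x) with hstepdef
  have hstep_gt : ∀ x, x < step x := fun x => (Nat.find_spec (hex x)).1
  have hstep_ge : ∀ x, θ * A x ≤ A (step x) := fun x => (Nat.find_spec (hex x)).2
  have hstep_min : ∀ x n, x ≤ n → n < step x → 0 < A x → A n < θ * A x := by
    intro x n hxn hns hAx
    rcases eq_or_lt_of_le hxn with rfl | h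
    · nlinarith
    · have h2 := Nat.find_min (hex x) hns
      push_neg at h2
      exact h2 h
  set u : ℕ → ℕ := fun j => step^[j] n₁ with hudef
  have husucc : ∀ j, u (j+1) = step (u j) := fun j => Function.iterate_succ_apply' step j n₁
  have humono : StrictMono u := strictMono_nat_of_lt_succ fun j => by
    rw [husucc]; exact hstep_gt _
  have hu0 : u 0 = n₁ := rfl
  have hu1 : ∀ j, 1 ≤ u j := by
    intro j
    have h1 : u 0 ≤ u j := humono.monotone (Nat.zero_le j)
    rw [hu0] at h1
    exact le_trans hn₁1 h1
  have huA : ∀ j, θ ^ j ≤ A (u j) := by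
    intro j
    induction j with
    | zero => rw [hu0]; simpa using hn₁A
    | succ j ih =>
      rw [husucc, pow_succ]
      calc θ ^ j * θ ≤ A (u j) * θ := mul_le_mul_of_nonneg_right ih hθ0.le
        _ = θ * A (u j) := mul_comm _ _
        _ ≤ A (step (u j)) := hstep_ge _
  have huApos : ∀ j, 0 < A (u j) := fun j => lt_of_lt_of_le (pow_pos hθ0 j) (huA j)
  have huAlt : ∀ j n, u j ≤ n → n < u (j+1) → A n < θ * A (u j) := by
    intro j n h1 h2
    exact hstep_min _ _ h1 (by rwa [husucc] at h2) (huApos j)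
  -- events
  set r : ℕ → ℕ → ℕ := fun i j => if i ≤ N then u j + i else u (j+1) - 1 with hrdef
  set act : ℕ → ℕ → Prop := fun i j => (i ≤ N ∧ u j + i < u (j+1)) ∨ i = N + 1 with hactdef
  set Ev : ℕ → ℕ → Set Ω := fun i j =>
    if act i j then
      {ω | (δ/2) * A (u j) < |S (r i j) ω - ∫ ω', S (r i j) ω' ∂P|}
    else ∅ with hEvdef
  have hrange : ∀ i j, act i j → u j ≤ r i j ∧ r i j < u (j+1) := by
    intro i j hact
    have h1 : u j < u (j+1) := humono (Nat.lt_succ_self j)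
    have h2 := hu1 (j+1)
    rcases hact with ⟨hiN, hlt⟩ | rfl
    · simp only [hrdef, if_pos hiN]
      exact ⟨Nat.le_add_right _ _, hlt⟩
    · simp only [hrdef, if_neg (Nat.not_succ_le_self N)]
      omega
  have hψθ : ∀ j : ℕ, 0 < ψ (θ^j) := fun j => hψ.1 _ (pow_pos hθ0 j)
  set cb : ℕ → ℝ := fun j => K0 * θ^2 / ((δ/2)^2 * ψ (θ^j)) with hcbdef
  have hEv_bound : ∀ i j, P (Ev i j) ≤ ENNReal.ofReal (cb j) := by
    intro i j
    by_cases hact : act i j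
    · have hEvij : Ev i j = {ω | (δ/2) * A (u j) < |S (r i j) ω - ∫ ω', S (r i j) ω' ∂P|} := by
        simp only [hEvdef, if_pos hact]
      rw [hEvij]
      obtain ⟨hq1, hq2⟩ := hrange i j hact
      have hq1' : 1 ≤ r i j := le_trans (hu1 j) hq1
      have haq : 0 < (δ/2) * A (u j) := mul_pos hε (huApos j)
      refine le_trans (aux_cheb P (hSmem (r i j)) haq) ?_
      apply ENNReal.ofReal_le_ofReal
      have hAq : A (r i j) < θ * A (u j) := huAlt j (r i j) hq1 hq2
      have hAq0 : 0 < A (r i j) := hApos _ hq1'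
      have hψq : 0 < ψ (A (r i j)) := hψ.1 _ hAq0
      have hψmono : ψ (θ^j) ≤ ψ (A (r i j)) :=
        hψ.2.1 (pow_pos hθ0 j) hAq0 (le_trans (huA j) (hAmono hq1))
      have hauj := huApos j
      calc (∫ ω, |S (r i j) ω - ∫ ω', S (r i j) ω' ∂P| ^ 2 ∂P) / ((δ/2) * A (u j))^2
          ≤ (K0 * (θ * A (u j))^2 / ψ (θ^j)) / ((δ/2) * A (u j))^2 := by
            apply (div_le_div_iff_of_pos_right (by positivity)).2
            refine le_trans (hvar2 _ hq1') ?_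
            apply div_le_div₀ (by positivity)
              (mul_le_mul_of_nonneg_left (pow_le_pow_left₀ hAq0.le hAq.le 2) hK0nn)
              (hψθ j) hψmono
        _ = cb j := by
            have hψj := hψθ j
            rw [hcbdef]
            field_simp
    · have hEvij : Ev i j = ∅ := by simp only [hEvdef, if_neg hact]
      rw [hEvij, measure_empty]
      exact zero_le
  have hcb_nn : ∀ j, 0 ≤ cb j := by
    intro j
    have := hψθ j
    rw [hcbdef]
    positivity
  have hcb_sum : Summable cb := by
    have h1 := (aux_geom hψ hθ).mul_left (K0 * θ^2 / (δ/2)^2)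
    apply h1.congr
    intro j
    have hψj := hψθ j
    rw [hcbdef]
    field_simp
  have hBC : ∀ i : ℕ, ∀ᵐ ω ∂P, ∀ᶠ j in atTop, ω ∉ Ev i j := by
    intro i
    refine ae_eventually_notMem (ne_of_lt ?_)
    calc ∑' j, P (Ev i j) ≤ ∑' j, ENNReal.ofReal (cb j) := ENNReal.tsum_le_tsum (hEv_bound i)
      _ = ENNReal.ofReal (∑' j, cb j) := (ENNReal.ofReal_tsum_of_nonneg hcb_nn hcb_sum).symm
      _ < ⊤ := ENNReal.ofReal_lt_top
  have hBCall : ∀ᵐ ω ∂P, ∀ i : ℕ, ∀ᶠ j in atTop, ω ∉ Ev i j := ae_all_iff.2 hBC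
  -- block location
  have hblock : ∀ J n, u J ≤ n → ∃ j, J ≤ j ∧ u j ≤ n ∧ n < u (j+1) := by
    intro J n hn
    have hex2 : ∃ j, n < u (j + 1) :=
      ⟨n, lt_of_lt_of_le (Nat.lt_succ_self n) humono.le_apply⟩
    refine ⟨Nat.find hex2, ?_, ?_, Nat.find_spec hex2⟩
    · by_contra hcon
      push_neg at hcon
      have h1 : u (Nat.find hex2 + 1) ≤ u J := humono.monotone (by omega)
      exact absurd (lt_of_lt_of_le (Nat.find_spec hex2) (le_trans h1 hn)) (lt_irrefl n)
    · rcases Nat.eq_zero_or_pos (Nat.find hex2) with h0 | h0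
      · rw [h0, hu0]
        have h1 : u 0 ≤ u J := humono.monotone (Nat.zero_le J)
        rw [hu0] at h1
        exact le_trans h1 hn
      · have hm := Nat.find_min hex2 (Nat.sub_lt h0 Nat.one_pos)
        rw [Nat.sub_add_cancel h0] at hm
        exact le_of_not_gt hm
  -- conclusion
  filter_upwards [hBCall] with ω hω
  have hfin : ∀ᶠ j in atTop, ∀ i ∈ Finset.range (N+2), ω ∉ Ev i j :=
    (Finset.range (N+2)).eventually_all.2 fun i _ => hω i
  obtain ⟨J, hJ⟩ := eventually_atTop.1 hfin
  rw [eventually_atTop]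
  refine ⟨u J, fun n hn => ?_⟩
  obtain ⟨j, hJj, hj1, hj2⟩ := hblock J n hn
  have hnot := hJ j hJj
  have hauj := huApos j
  have hn1 : 1 ≤ n := le_trans (hu1 j) hj1
  have hAn : 0 < A n := hApos n hn1
  have hAjn : A (u j) ≤ A n := hAmono hj1
  have hEv_elim : ∀ i, i < N + 2 → act i j →
      |S (r i j) ω - ∫ ω', S (r i j) ω' ∂P| ≤ (δ/2) * A (u j) := by
    intro i hi hact
    have h1 := hnot i (Finset.mem_range.2 hi)
    have hEvij : Ev i j = {ω | (δ/2) * A (u j) < |S (r i j) ω - ∫ ω', S (r i j) ω' ∂P|} := by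
      simp only [hEvdef, if_pos hact]
    rw [hEvij] at h1
    simpa only [Set.mem_setOf_eq, not_lt] using h1
  by_cases hcase : n ≤ u j + N
  · -- short block
    have hiN : n - u j ≤ N := by omega
    have hact : act (n - u j) j := Or.inl ⟨hiN, by omega⟩
    have hr : r (n - u j) j = n := by
      simp only [hrdef, if_pos hiN]; omega
    have h1 := hEv_elim (n - u j) (by omega) hact
    rw [hr] at h1
    have h2 : (δ/2) ≤ δ := by linarith
    calc |S n ω - ∫ ω', S n ω' ∂P| ≤ (δ/2) * A (u j) := h1
      _ ≤ δ * A n := mul_le_mul h2 hAjn hauj.le hδ.le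
  · -- long block
    push_neg at hcase
    have hult : u j < u (j+1) := humono (Nat.lt_succ_self j)
    have hact0 : act 0 j := Or.inl ⟨Nat.zero_le N, by omega⟩
    have hactm : act (N+1) j := Or.inr rfl
    have hr0 : r 0 j = u j := by simp only [hrdef]; simp
    have hrm : r (N+1) j = u (j+1) - 1 := by
      simp only [hrdef, if_neg (Nat.not_succ_le_self N)]
    have hT0 := hEv_elim 0 (by omega) hact0
    rw [hr0] at hT0
    have hTm := hEv_elim (N+1) (by omega) hactm
    rw [hrm] at hTm
    set m := u (j+1) - 1 with hmdef
    have h2u := hu1 (j+1)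
    have hujm : u j ≤ m := by omega
    have hnm : n ≤ m := by omega
    have hm1 : 1 ≤ m := le_trans (hu1 j) hujm
    have hAm : A m < θ * A (u j) := huAlt j m hujm (by omega)
    have hG : ∑ k ∈ Finset.Ioc (u j) m, b k * ∫ ω', X k ω' ∂P ≤ (δ/2) * A (u j) := by
      have h1 : N ≤ m - (u j + 1) := by omega
      have h2 : u j + 1 ≤ m := by omega
      refine le_trans (hmean2 (u j) m h2 h1) ?_
      have h3 : A m - A (u j) ≤ (θ - 1) * A (u j) := by nlinarith [hAm]
      calc C * (A m - A (u j)) ≤ C * ((θ-1) * A (u j)) := mul_le_mul_of_nonneg_left h3 hC.le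
        _ = (C * (θ-1)) * A (u j) := by ring
        _ = (δ/2) * A (u j) := by rw [hCθ]
    have hGsub : ∀ p q : ℕ, u j ≤ p → q ≤ m →
        ∑ k ∈ Finset.Ioc p q, b k * ∫ ω', X k ω' ∂P ≤ (δ/2) * A (u j) := by
      intro p q hp hq
      refine le_trans ?_ hG
      apply Finset.sum_le_sum_of_subset_of_nonneg
      · intro k hk
        rw [Finset.mem_Ioc] at *
        omega
      · intro k hk _
        have hk1 : 1 ≤ k := by
          rw [Finset.mem_Ioc] at hk
          have := hu1 j
          omega
        exact mul_nonneg (hb k hk1).le (hEX k hk1)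
    have hup : S n ω - ∫ ω', S n ω' ∂P ≤ δ * A (u j) := by
      have h1 : S n ω ≤ S m ω := hSle ω n m hnm
      have h2 := hESdiff n m hnm
      have h3 := hGsub n m hj1 (le_refl m)
      have h4 := (abs_le.1 hTm).2
      linarith
    have hlo : -(δ * A (u j)) ≤ S n ω - ∫ ω', S n ω' ∂P := by
      have h1 : S (u j) ω ≤ S n ω := hSle ω (u j) n hj1
      have h2 := hESdiff (u j) n hj1
      have h3 := hGsub (u j) n (le_refl _) hnm
      have h4 := (abs_le.1 hT0).1
      linarith
    have habs : |S n ω - ∫ ω', S n ω' ∂P| ≤ δ * A (u j) := abs_le.2 ⟨hlo, hup⟩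
    exact le_trans habs (mul_le_mul_of_nonneg_left hAjn hδ.le)
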